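/- arXiv:1801.03265 — 5 statements merged into one kernel-verified Lean document; each statement's English description precedes it below -/
import Mathlib

section
/- In the optimistic OMD updates w_t = argmin_{w∈Ω}{⟨w, m_t⟩ + D_{ψ_t}(w, w'_t)} and w'_{t+1} = argmin_{w∈Ω}{⟨w, ℓ̂_t + a_t⟩ + D_{ψ_t}(w, w'_t)}, if the condition ⟨w_t - w'_{t+1}, ℓ̂_t - m_t + a_t⟩ ≤ ⟨w_t, a_t⟩ holds, then for all u ∈ Ω: ⟨w_t - u, ℓ̂_t⟩ ≤ D_{ψ_t}(u, w'_t) - D_{ψ_t}(u, w'_{t+1}) + ⟨u, a_t⟩ - D_{ψ_t}(w'_{t+1}, w_t) - D_{ψ_t}(w_t, w'_t). -/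
open scoped RealInnerProductSpace

/-- Variational inequality from minimality over a convex set. -/
lemma vi_lemma {K : ℕ} {Ω : Set (EuclideanSpace ℝ (Fin K))} (hΩ : Convex ℝ Ω)
    {ψ : EuclideanSpace ℝ (Fin K) → ℝ}
    {g : EuclideanSpace ℝ (Fin K) → EuclideanSpace ℝ (Fin K)}
    (hg : ∀ v, HasGradientAt ψ (g v) v)
    (c v x : EuclideanSpace ℝ (Fin K)) (hx : x ∈ Ω)
    (hmin : ∀ w ∈ Ω, ⟪x, c⟫ + (ψ x - ψ v - ⟪g v, x - v⟫) ≤ ⟪w, c⟫ + (ψ w - ψ v - ⟪g v, w - v⟫))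
    (w : EuclideanSpace ℝ (Fin K)) (hw : w ∈ Ω) :
    0 ≤ ⟪c + g x - g v, w - x⟫ := by
  set F : EuclideanSpace ℝ (Fin K) → ℝ := fun z => ⟪c, z⟫ + (ψ z - ψ v) - ⟪g v, z - v⟫
  have hmin' : IsLocalMinOn F Ω x := by
    apply IsMinOn.localize
    intro z hz
    have := hmin z hz
    simp only [F, Set.mem_setOf_eq]
    have e1 : ⟪x, c⟫ = ⟪c, x⟫ := real_inner_comm c x
    have e2 : ⟪z, c⟫ = ⟪c, z⟫ := real_inner_comm c z
    linarith
  have hd : HasFDerivAt F (innerSL ℝ c + (InnerProductSpace.toDual ℝ _ (g x) : _) - innerSL ℝ (g v)) x := by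
    have h1 : HasFDerivAt (fun z : EuclideanSpace ℝ (Fin K) => ⟪c, z⟫) (innerSL ℝ c) x :=
      (innerSL ℝ c).hasFDerivAt
    have h2 : HasFDerivAt ψ (InnerProductSpace.toDual ℝ _ (g x) : _) x :=
      (hasGradientAt_iff_hasFDerivAt.mp (hg x))
    have h3 : HasFDerivAt (fun z : EuclideanSpace ℝ (Fin K) => ⟪g v, z - v⟫)
        (innerSL ℝ (g v)) x := by
      have : HasFDerivAt (fun z : EuclideanSpace ℝ (Fin K) => ⟪g v, z⟫ - ⟪g v, v⟫)
          (innerSL ℝ (g v)) x := by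
        simpa using ((innerSL ℝ (g v)).hasFDerivAt (x := x)).sub_const ⟪g v, v⟫
      convert this using 2 with z
      rw [inner_sub_right]
    exact (h1.add (h2.sub_const (ψ v))).sub h3
  have hcone : w - x ∈ posTangentConeAt Ω x :=
    sub_mem_posTangentConeAt_of_segment_subset (hΩ.segment_subset hx hw)
  have := hmin'.hasFDerivWithinAt_nonneg hd.hasFDerivWithinAt hcone
  simpa [inner_add_left, inner_sub_left, InnerProductSpace.toDual_apply_apply] using this

/-- Bregman divergence of `ψ` with gradient map `g`. -/
noncomputable def breg {K : ℕ} (ψ : EuclideanSpace ℝ (Fin K) → ℝ)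
    (g : EuclideanSpace ℝ (Fin K) → EuclideanSpace ℝ (Fin K))
    (u v : EuclideanSpace ℝ (Fin K)) : ℝ :=
  ψ u - ψ v - ⟪g v, u - v⟫

theorem stmt_6 {K : ℕ} (Ω : Set (EuclideanSpace ℝ (Fin K))) (hΩ : Convex ℝ Ω)
    (ψ : EuclideanSpace ℝ (Fin K) → ℝ)
    (g : EuclideanSpace ℝ (Fin K) → EuclideanSpace ℝ (Fin K))
    (hg : ∀ v, HasGradientAt ψ (g v) v)
    (hψ : ConvexOn ℝ Ω ψ)
    (m ℓhat a wt wt' wt1' : EuclideanSpace ℝ (Fin K))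
    (hwt : wt ∈ Ω) (hwt' : wt' ∈ Ω) (hwt1' : wt1' ∈ Ω)
    (hmin1 : ∀ w ∈ Ω, ⟪wt, m⟫ + breg ψ g wt wt' ≤ ⟪w, m⟫ + breg ψ g w wt')
    (hmin2 : ∀ w ∈ Ω,
      ⟪wt1', ℓhat + a⟫ + breg ψ g wt1' wt' ≤ ⟪w, ℓhat + a⟫ + breg ψ g w wt')
    (hcond : ⟪wt - wt1', ℓhat - m + a⟫ ≤ ⟪wt, a⟫)
    (u : EuclideanSpace ℝ (Fin K)) (hu : u ∈ Ω) :
    ⟪wt - u, ℓhat⟫ ≤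
      breg ψ g u wt' - breg ψ g u wt1' + ⟪u, a⟫
        - breg ψ g wt1' wt - breg ψ g wt wt' := by
  simp only [breg] at hmin1 hmin2 ⊢
  have VI1 := vi_lemma hΩ hg m wt' wt hwt hmin1 wt1' hwt1'
  have VI2 := vi_lemma hΩ hg (ℓhat + a) wt' wt1' hwt1' hmin2 u hu
  simp only [inner_add_left, inner_sub_left, inner_add_right, inner_sub_right]
    at VI1 VI2 hcond ⊢
  have c1 : ⟪m, wt⟫ = ⟪wt, m⟫ := real_inner_comm wt m
  have c2 : ⟪m, wt1'⟫ = ⟪wt1', m⟫ := real_inner_comm wt1' m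
  have c3 : ⟪ℓhat, u⟫ = ⟪u, ℓhat⟫ := real_inner_comm u ℓhat
  have c4 : ⟪ℓhat, wt1'⟫ = ⟪wt1', ℓhat⟫ := real_inner_comm wt1' ℓhat
  have c5 : ⟪a, u⟫ = ⟪u, a⟫ := real_inner_comm u a
  have c6 : ⟪a, wt1'⟫ = ⟪wt1', a⟫ := real_inner_comm wt1' a
  have c7 : ⟪ℓhat, wt⟫ = ⟪wt, ℓhat⟫ := real_inner_comm wt ℓhat
  have c8 : ⟪a, wt⟫ = ⟪wt, a⟫ := real_inner_comm wt a
  have c9 : ⟪m, u⟫ = ⟪u, m⟫ := real_inner_comm u m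
  linarith
end

section
/- In the OMD updates w_t = argmin_{w∈Ω}{⟨w, m_t⟩ + D_{ψ_t}(w, w'_t)} and w'_{t+1} = argmin_{w∈Ω}{⟨w, ℓ̂_t⟩ + D_{ψ_t}(w, w'_t)}, for all u ∈ Ω: ⟨w_t - u, ℓ̂_t⟩ ≤ D_{ψ_t}(u, w'_t) - D_{ψ_t}(u, w'_{t+1}) + ⟨w_t - w'_{t+1}, ℓ̂_t - m_t⟩ - D_{ψ_t}(w'_{t+1}, w_t) - D_{ψ_t}(w_t, w'_t). -/
open scoped RealInnerProductSpace

lemma foc_aux {E : Type*} [NormedAddCommGroup E] [InnerProductSpace ℝ E] [CompleteSpace E]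
    {f : E → ℝ} {G x d : E} (hf : HasGradientAt f G x)
    (hmin : ∀ t : ℝ, t ∈ Set.Icc (0:ℝ) 1 → f x ≤ f (x + t • d)) :
    0 ≤ ⟪G, d⟫ := by
  have hc : HasDerivAt (fun t : ℝ => x + t • d) d 0 := by
    simpa using ((hasDerivAt_id (0:ℝ)).smul_const d).const_add x
  have hφ : HasDerivAt (fun t : ℝ => f (x + t • d)) ⟪G, d⟫ 0 := by
    have hF : HasFDerivAt f ((InnerProductSpace.toDual ℝ E) G) (x + (0:ℝ) • d) := by
      simpa using hf.hasFDerivAt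
    have := hF.comp_hasDerivAt 0 hc
    simpa [Function.comp_def] using this
  have hslope := hasDerivAt_iff_tendsto_slope.1 hφ
  have hslope' : Filter.Tendsto (slope (fun t : ℝ => f (x + t • d)) 0)
      (nhdsWithin 0 (Set.Ioi 0)) (nhds ⟪G, d⟫) :=
    hslope.mono_left (nhdsWithin_mono _ (by intro t ht; exact ne_of_gt ht))
  refine ge_of_tendsto hslope' ?_
  filter_upwards [Ioc_mem_nhdsGT_of_mem (by norm_num : (0:ℝ) ∈ Set.Ico 0 1)] with t ht
  have h1 := hmin t ⟨le_of_lt ht.1, ht.2⟩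
  have : slope (fun t : ℝ => f (x + t • d)) 0 t
      = (f (x + t • d) - f (x + (0:ℝ) • d)) / t := by
    simp [slope_def_field, div_eq_mul_inv, mul_comm]
  rw [this]
  apply div_nonneg _ (le_of_lt ht.1)
  simpa using sub_nonneg.2 h1

lemma grad_obj {K : ℕ} (ψ : EuclideanSpace ℝ (Fin K) → ℝ)
    (g : EuclideanSpace ℝ (Fin K) → EuclideanSpace ℝ (Fin K))
    (hg : ∀ v, HasGradientAt ψ (g v) v)
    (c v x : EuclideanSpace ℝ (Fin K)) :
    HasGradientAt (fun w => ⟪w, c⟫ + breg ψ g w v) (c + g x - g v) x := by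
  rw [hasGradientAt_iff_hasFDerivAt]
  have h1 : HasFDerivAt (fun w : EuclideanSpace ℝ (Fin K) => ⟪w, c⟫)
      (InnerProductSpace.toDual ℝ _ c) x := by
    have he : (⇑(InnerProductSpace.toDual ℝ (EuclideanSpace ℝ (Fin K)) c))
        = fun w : EuclideanSpace ℝ (Fin K) => ⟪w, c⟫ := by
      ext w; rw [InnerProductSpace.toDual_apply_apply]; exact real_inner_comm _ _
    exact he ▸ (InnerProductSpace.toDual ℝ (EuclideanSpace ℝ (Fin K)) c).hasFDerivAt
  have h2 : HasFDerivAt ψ (InnerProductSpace.toDual ℝ _ (g x)) x :=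
    (hg x).hasFDerivAt
  have h3 : HasFDerivAt (fun w : EuclideanSpace ℝ (Fin K) => ⟪g v, w - v⟫)
      (InnerProductSpace.toDual ℝ _ (g v)) x := by
    have h4 := (InnerProductSpace.toDual ℝ (EuclideanSpace ℝ (Fin K)) (g v)).hasFDerivAt (x := x)
    have he : (fun w : EuclideanSpace ℝ (Fin K) => ⟪g v, w - v⟫)
        = fun w => (InnerProductSpace.toDual ℝ (EuclideanSpace ℝ (Fin K)) (g v)) w - ⟪g v, v⟫ := by
      ext w; simp [inner_sub_right]
    rw [he]
    exact h4.sub_const _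
  have hcomb := ((h1.add h2).sub h3).add_const (-ψ v)
  have hfun : (fun w : EuclideanSpace ℝ (Fin K) => (⟪w, c⟫ + ψ w - ⟪g v, w - v⟫) + (-ψ v))
      = fun w => ⟪w, c⟫ + breg ψ g w v := by
    ext w; simp [breg]; ring
  rw [← hfun]
  exact hcomb.congr_fderiv (by simp [map_add, map_sub])

theorem stmt_7 {K : ℕ} (Ω : Set (EuclideanSpace ℝ (Fin K))) (hΩ : Convex ℝ Ω)
    (ψ : EuclideanSpace ℝ (Fin K) → ℝ)
    (g : EuclideanSpace ℝ (Fin K) → EuclideanSpace ℝ (Fin K))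
    (hg : ∀ v, HasGradientAt ψ (g v) v)
    (hψ : ConvexOn ℝ Ω ψ)
    (m ℓhat wt wt' wt1' : EuclideanSpace ℝ (Fin K))
    (hwt : wt ∈ Ω) (hwt' : wt' ∈ Ω) (hwt1' : wt1' ∈ Ω)
    (hmin1 : ∀ w ∈ Ω, ⟪wt, m⟫ + breg ψ g wt wt' ≤ ⟪w, m⟫ + breg ψ g w wt')
    (hmin2 : ∀ w ∈ Ω, ⟪wt1', ℓhat⟫ + breg ψ g wt1' wt' ≤ ⟪w, ℓhat⟫ + breg ψ g w wt')
    (u : EuclideanSpace ℝ (Fin K)) (hu : u ∈ Ω) :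
    ⟪wt - u, ℓhat⟫ ≤
      breg ψ g u wt' - breg ψ g u wt1' + ⟪wt - wt1', ℓhat - m⟫
        - breg ψ g wt1' wt - breg ψ g wt wt' := by
  have h1 : 0 ≤ ⟪m + g wt - g wt', wt1' - wt⟫ := by
    apply foc_aux (grad_obj ψ g hg m wt' wt)
    intro t ht
    exact hmin1 _ (hΩ.add_smul_sub_mem hwt hwt1' ht)
  have h2 : 0 ≤ ⟪ℓhat + g wt1' - g wt', u - wt1'⟫ := by
    apply foc_aux (grad_obj ψ g hg ℓhat wt' wt1')
    intro t ht
    exact hmin2 _ (hΩ.add_smul_sub_mem hwt1' hu ht)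
  simp only [breg, inner_add_left, inner_sub_left, inner_sub_right] at h1 h2 ⊢
  have c1 : ⟪ℓhat, wt⟫ = ⟪wt, ℓhat⟫ := real_inner_comm _ _
  have c2 : ⟪ℓhat, u⟫ = ⟪u, ℓhat⟫ := real_inner_comm _ _
  have c3 : ⟪ℓhat, wt1'⟫ = ⟪wt1', ℓhat⟫ := real_inner_comm _ _
  have c4 : ⟪m, wt⟫ = ⟪wt, m⟫ := real_inner_comm _ _
  have c5 : ⟪m, wt1'⟫ = ⟪wt1', m⟫ := real_inner_comm _ _
  linarith
end

section
/- Let w ∈ ℝ^K have strictly positive coordinates, 0 < η_i ≤ 1/81, and suppose w' satisfies ∑_{i=1}^K (1/η_i)(w'_i - w_i)²/w_i² ≤ 1. Then for every h ∈ ℝ^K: 0.9·√(∑_i (1/η_i) h_i²/w_i²) ≤ √(∑_i (1/η_i) h_i²/(w'_i)²) ≤ 1.2·√(∑_i (1/η_i) h_i²/w_i²). -/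
theorem stmt_9 {K : ℕ} (w w' : Fin K → ℝ) (η : Fin K → ℝ)
    (hw : ∀ i, 0 < w i) (hη : ∀ i, 0 < η i ∧ η i ≤ 1/81)
    (hball : ∑ i, (1 / η i) * (w' i - w i)^2 / (w i)^2 ≤ 1)
    (h : Fin K → ℝ) :
    0.9 * Real.sqrt (∑ i, (1 / η i) * (h i)^2 / (w i)^2) ≤
        Real.sqrt (∑ i, (1 / η i) * (h i)^2 / (w' i)^2) ∧
      Real.sqrt (∑ i, (1 / η i) * (h i)^2 / (w' i)^2) ≤
        1.2 * Real.sqrt (∑ i, (1 / η i) * (h i)^2 / (w i)^2) := by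
  -- per-coordinate bounds on w'
  have hwb : ∀ i, 8/9 * w i ≤ w' i ∧ w' i ≤ 10/9 * w i := by
    intro i
    have hterm : (1 / η i) * (w' i - w i)^2 / (w i)^2 ≤ 1 := by
      refine le_trans ?_ hball
      refine Finset.single_le_sum (f := fun j => (1 / η j) * (w' j - w j)^2 / (w j)^2)
        (fun j _ => ?_) (Finset.mem_univ i)
      have h1 := (hη j).1
      have h2 := hw j
      positivity
    have hηi := hη i
    have hwi := hw i
    have h1 : (1 / η i) * (w' i - w i)^2 ≤ (w i)^2 := by
      rw [div_le_one (by positivity)] at hterm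
      linarith
    have hinv : (81:ℝ) ≤ 1 / η i := by
      rw [le_div_iff₀ hηi.1]; linarith [hηi.2]
    have hle : (w' i - w i)^2 ≤ (w i / 9)^2 := by
      nlinarith [mul_le_mul_of_nonneg_right hinv (sq_nonneg (w' i - w i))]
    constructor <;> nlinarith [sq_nonneg (w' i - w i)]
  have key : ∀ i, 0.81 * ((1 / η i) * (h i)^2 / (w i)^2) ≤ (1 / η i) * (h i)^2 / (w' i)^2
      ∧ (1 / η i) * (h i)^2 / (w' i)^2 ≤ 1.44 * ((1 / η i) * (h i)^2 / (w i)^2) := by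
    intro i
    have hwi := hw i
    have hηi := (hη i).1
    have hb := hwb i
    have hb0 : 0 < w' i := by nlinarith [hb.1]
    have hX : 0 ≤ (1 / η i) * (h i)^2 := by positivity
    constructor
    · rw [mul_div_assoc' 0.81, div_le_div_iff₀ (by positivity) (by positivity)]
      nlinarith [mul_le_mul_of_nonneg_left (by nlinarith [hb.2] : 0.81 * (w' i)^2 ≤ (w i)^2) hX]
    · rw [mul_div_assoc' 1.44, div_le_div_iff₀ (by positivity) (by positivity)]
      nlinarith [mul_le_mul_of_nonneg_left (by nlinarith [hb.1] : (w i)^2 ≤ 1.44 * (w' i)^2) hX]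
  set S := ∑ i, (1 / η i) * (h i)^2 / (w i)^2 with hS
  set S' := ∑ i, (1 / η i) * (h i)^2 / (w' i)^2 with hS'
  have hSnn : 0 ≤ S := Finset.sum_nonneg fun i _ => by
    have h1 := (hη i).1; have h2 := hw i; positivity
  have hlow : 0.81 * S ≤ S' := by
    rw [hS, hS', Finset.mul_sum]
    exact Finset.sum_le_sum fun i _ => (key i).1
  have hhigh : S' ≤ 1.44 * S := by
    rw [hS, hS', Finset.mul_sum]
    exact Finset.sum_le_sum fun i _ => (key i).2
  have s081 : Real.sqrt 0.81 = 0.9 := by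
    rw [show (0.81:ℝ) = 0.9^2 by norm_num, Real.sqrt_sq (by norm_num)]
  have s144 : Real.sqrt 1.44 = 1.2 := by
    rw [show (1.44:ℝ) = 1.2^2 by norm_num, Real.sqrt_sq (by norm_num)]
  constructor
  · calc 0.9 * Real.sqrt S = Real.sqrt (0.81 * S) := by
          rw [Real.sqrt_mul (by norm_num), s081]
        _ ≤ Real.sqrt S' := Real.sqrt_le_sqrt hlow
  · calc Real.sqrt S' ≤ Real.sqrt (1.44 * S) := Real.sqrt_le_sqrt hhigh
        _ = 1.2 * Real.sqrt S := by rw [Real.sqrt_mul (by norm_num), s144]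
end

section
/- Let η ∈ (0, 1/162], let w ∈ ℝ^K with w_i > 0 and ∑_i w_i ≤ 1, and let ℓ̂, m ∈ ℝ^K satisfy w_i·|ℓ̂_i - m_i| ≤ 3 for all i and η·∑_{i=1}^K w_i²(ℓ̂_i - m_i)² ≤ 1/18. Then the dual-norm bound √(∑_{i=1}^K η·w_i²·(ℓ̂_i - m_i + a_i)²) ≤ 1/3 holds both when a_i = 0 and when a_i = 6η·w_i·(ℓ̂_i - m_i)². -/
lemma sqrt_le_third {x : ℝ} (hx : x ≤ 1/9) : Real.sqrt x ≤ 1/3 := by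
  have h := Real.sqrt_le_sqrt hx
  have : Real.sqrt (1/9) = 1/3 := by
    rw [show (1/9 : ℝ) = (1/3)^2 by norm_num, Real.sqrt_sq (by norm_num)]
  linarith

theorem stmt_10 {K : ℕ} (η : ℝ) (hη : 0 < η ∧ η ≤ 1/162)
    (w ℓhat m : Fin K → ℝ) (hw : ∀ i, 0 < w i) (hw1 : ∑ i, w i ≤ 1)
    (hbd : ∀ i, w i * |ℓhat i - m i| ≤ 3)
    (hsum : η * ∑ i, (w i)^2 * (ℓhat i - m i)^2 ≤ 1/18) :
    Real.sqrt (∑ i, η * (w i)^2 * (ℓhat i - m i + 0)^2) ≤ 1/3 ∧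
      Real.sqrt (∑ i, η * (w i)^2 *
        (ℓhat i - m i + 6 * η * w i * (ℓhat i - m i)^2)^2) ≤ 1/3 := by
  obtain ⟨hη0, hη1⟩ := hη
  constructor
  · apply sqrt_le_third
    have : ∑ i, η * (w i)^2 * (ℓhat i - m i + 0)^2
        = η * ∑ i, (w i)^2 * (ℓhat i - m i)^2 := by
      rw [Finset.mul_sum]; congr 1; ext i; ring
    rw [this]; linarith
  · apply sqrt_le_third
    have key : ∀ i : Fin K, η * (w i)^2 * (ℓhat i - m i + 6 * η * w i * (ℓhat i - m i)^2)^2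
        ≤ (100/81) * (η * ((w i)^2 * (ℓhat i - m i)^2)) := by
      intro i
      set u := w i * (ℓhat i - m i) with hu
      have habs : |u| ≤ 3 := by
        have := hbd i
        have hwpos := (hw i).le
        rw [hu, abs_mul, abs_of_nonneg hwpos]
        exact this
      have hub : -3 ≤ u ∧ u ≤ 3 := abs_le.mp habs
      have hx1 : 6 * η * u ≤ 1/9 := by nlinarith [hub.2, hub.1]
      have hx2 : -(1/9) ≤ 6 * η * u := by nlinarith [hub.1, hub.2]
      have expand : η * (w i)^2 * (ℓhat i - m i + 6 * η * w i * (ℓhat i - m i)^2)^2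
          = η * (u + 6 * η * u^2)^2 := by rw [hu]; ring
      have expand2 : (100/81) * (η * ((w i)^2 * (ℓhat i - m i)^2)) = (100/81) * (η * u^2) := by
        rw [hu]; ring
      rw [expand, expand2]
      have h3 : (u + 6 * η * u^2)^2 ≤ (100/81) * u^2 := by
        nlinarith [sq_nonneg u, mul_nonneg (sub_nonneg.mpr hx1) (by linarith : (0:ℝ) ≤ 1/9 + 6*η*u)]
      nlinarith [sq_nonneg (u + 6*η*u^2)]
    calc ∑ i, η * (w i)^2 * (ℓhat i - m i + 6 * η * w i * (ℓhat i - m i)^2)^2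
        ≤ ∑ i, (100/81) * (η * ((w i)^2 * (ℓhat i - m i)^2)) :=
          Finset.sum_le_sum fun i _ => key i
      _ = (100/81) * (η * ∑ i, (w i)^2 * (ℓhat i - m i)^2) := by
          rw [Finset.mul_sum, Finset.mul_sum]
      _ ≤ (100/81) * (1/18) := by linarith
      _ ≤ 1/9 := by norm_num
end

section
/- Fix an arm i. Let i_1, …, i_T ∈ [K] be played arms, α_i(t) = max{s < t : i_s = i} (or 0), ℓ_{t,i} ∈ [-1,1] with ℓ_{0,i} = 0, and w_{t,i} > 0. Then ∑_{t : i_t = i} |ℓ_{t,i} - ℓ_{α_i(t),i}| / w_{t,i} ≤ (max_{t ∈ [T]} 1/w_{t,i}) · ∑_{s=1}^T |ℓ_{s,i} - ℓ_{s-1,i}|. -/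
/-- `α i t` is the most recent time `s < t` (with `s ≥ 1`) at which arm `i` was
played, or `0` if no such time exists. -/
def lastPlay {K : ℕ} (it : ℕ → Fin K) (i : Fin K) (t : ℕ) : ℕ :=
  ((Finset.Ico 1 t).filter (fun s => it s = i)).sup id

lemma tele (ℓ : ℕ → ℝ) (a : ℕ) : ∀ b, a ≤ b →
    |ℓ b - ℓ a| ≤ ∑ s ∈ Finset.Ioc a b, |ℓ s - ℓ (s - 1)| := by
  intro b
  induction b with
  | zero => intro h; interval_cases a; simp
  | succ n ih =>
    intro h
    rcases Nat.lt_or_ge a (n+1) with h' | h'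
    · have ha : a ≤ n := Nat.lt_succ_iff.mp h'
      calc |ℓ (n+1) - ℓ a| = |(ℓ (n+1) - ℓ n) + (ℓ n - ℓ a)| := by ring_nf
        _ ≤ |ℓ (n+1) - ℓ n| + |ℓ n - ℓ a| := abs_add_le _ _
        _ ≤ |ℓ (n+1) - ℓ n| + ∑ s ∈ Finset.Ioc a n, |ℓ s - ℓ (s - 1)| := by
            linarith [ih ha]
        _ = ∑ s ∈ Finset.Ioc a (n+1), |ℓ s - ℓ (s - 1)| := by
            rw [Finset.sum_Ioc_succ_top ha]; simp; ring
    · have : a = n + 1 := le_antisymm h h'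
      subst this; simp

theorem stmt_13 {K : ℕ} (T : ℕ) (hT : 1 ≤ T)
    (it : ℕ → Fin K) (i : Fin K) (ℓ : ℕ → ℝ) (w : ℕ → ℝ)
    (hℓ0 : ℓ 0 = 0)
    (hℓ : ∀ t ∈ Finset.Icc 1 T, ℓ t ∈ Set.Icc (-1 : ℝ) 1)
    (hw : ∀ t ∈ Finset.Icc 1 T, 0 < w t) :
    ∑ t ∈ (Finset.Icc 1 T).filter (fun t => it t = i),
        |ℓ t - ℓ (lastPlay it i t)| / w t ≤
      ((Finset.Icc 1 T).sup' (Finset.nonempty_Icc.2 hT) (fun t => 1 / w t)) *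
        ∑ s ∈ Finset.Icc 1 T, |ℓ s - ℓ (s - 1)| := by
  set S := (Finset.Icc 1 T).filter (fun t => it t = i) with hS
  set M := ((Finset.Icc 1 T).sup' (Finset.nonempty_Icc.2 hT) (fun t => 1 / w t)) with hM
  have h1T : (1:ℕ) ∈ Finset.Icc 1 T := by simp [hT]
  have hM0 : 0 ≤ M := by
    have h2 := Finset.le_sup' (fun t => 1 / w t) h1T
    have h3 : 0 < 1 / w 1 := by
      have := hw 1 h1T; positivity
    linarith
  have hαlt : ∀ t ∈ S, lastPlay it i t < t := by
    intro t ht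
    have ht' : t ∈ Finset.Icc 1 T := (Finset.mem_filter.mp ht).1
    have h1t : 0 < t := (Finset.mem_Icc.mp ht').1
    rw [lastPlay, Finset.sup_lt_iff h1t]
    intro b hb
    exact (Finset.mem_Ico.mp (Finset.mem_filter.mp hb).1).2
  -- per-term bound
  have key : ∀ t ∈ S, |ℓ t - ℓ (lastPlay it i t)| / w t ≤
      M * ∑ s ∈ Finset.Ioc (lastPlay it i t) t, |ℓ s - ℓ (s - 1)| := by
    intro t ht
    have ht' : t ∈ Finset.Icc 1 T := (Finset.mem_filter.mp ht).1
    have hwt := hw t ht'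
    have hle : 1 / w t ≤ M := Finset.le_sup' (fun t => 1 / w t) ht'
    have htel := tele ℓ (lastPlay it i t) t (le_of_lt (hαlt t ht))
    calc |ℓ t - ℓ (lastPlay it i t)| / w t
        = (1 / w t) * |ℓ t - ℓ (lastPlay it i t)| := by
          field_simp
      _ ≤ M * ∑ s ∈ Finset.Ioc (lastPlay it i t) t, |ℓ s - ℓ (s - 1)| := by
          apply mul_le_mul hle htel (abs_nonneg _) hM0
  have hdisj : (S : Set ℕ).PairwiseDisjoint
      (fun t => Finset.Ioc (lastPlay it i t) t) := by
    intro a ha b hb hab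
    wlog hlt : a < b generalizing a b
    · exact (this hb ha hab.symm (by omega)).symm
    have haS : a ∈ S := ha
    have hbS : b ∈ S := hb
    have ha1 : 1 ≤ a := (Finset.mem_Icc.mp (Finset.mem_filter.mp haS).1).1
    have hai : it a = i := (Finset.mem_filter.mp haS).2
    have hmem : a ∈ (Finset.Ico 1 b).filter (fun s => it s = i) := by
      simp [Finset.mem_Ico, ha1, hlt, hai]
    have hsup : a ≤ lastPlay it i b := Finset.le_sup (f := id) hmem
    simp only [Function.onFun]
    rw [Finset.disjoint_left]
    intro s hs hs'
    have := (Finset.mem_Ioc.mp hs).2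
    have := (Finset.mem_Ioc.mp hs').1
    omega
  calc ∑ t ∈ S, |ℓ t - ℓ (lastPlay it i t)| / w t
      ≤ ∑ t ∈ S, M * ∑ s ∈ Finset.Ioc (lastPlay it i t) t, |ℓ s - ℓ (s - 1)| :=
        Finset.sum_le_sum key
    _ = M * ∑ t ∈ S, ∑ s ∈ Finset.Ioc (lastPlay it i t) t, |ℓ s - ℓ (s - 1)| := by
        rw [Finset.mul_sum]
    _ = M * ∑ s ∈ S.biUnion (fun t => Finset.Ioc (lastPlay it i t) t),
          |ℓ s - ℓ (s - 1)| := by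
        rw [Finset.sum_biUnion hdisj]
    _ ≤ M * ∑ s ∈ Finset.Icc 1 T, |ℓ s - ℓ (s - 1)| := by
        apply mul_le_mul_of_nonneg_left _ hM0
        apply Finset.sum_le_sum_of_subset_of_nonneg
        · intro s hs
          obtain ⟨t, ht, hst⟩ := Finset.mem_biUnion.mp hs
          have ht' := Finset.mem_Icc.mp (Finset.mem_filter.mp ht).1
          have := Finset.mem_Ioc.mp hst
          simp only [Finset.mem_Icc]
          omega
        · intro s _ _; exact abs_nonneg _
end
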